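/- Let 𝒥_n be the n×n all-ones matrix. If a₁ ≠ 0, a₁ + a₂m ≠ 0, a₁ + a₃q ≠ 0, and a₁ + a₂m + a₃q + a₄mq ≠ 0, then A = a₁ I_m⊗I_q + a₂ 𝒥_m⊗I_q + a₃ I_m⊗𝒥_q + a₄ 𝒥_m⊗𝒥_q is invertible and its inverse also lies in the span of {I_m⊗I_q, 𝒥_m⊗I_q, I_m⊗𝒥_q, 𝒥_m⊗𝒥_q}, with first coefficient d₁ = 1/a₁, second coefficient d₂ = −a₂/(a₁(a₁+a₂m)), third coefficient d₃ = −a₃/(a₁(a₁+a₃q)). -/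
import Mathlib


open Matrix
open scoped Kronecker

/-- The `n × n` all-ones matrix. -/
def onesMat (n : ℕ) : Matrix (Fin n) (Fin n) ℝ := Matrix.of fun _ _ => 1

/-- Auxiliary: if the four scalar coefficient equations hold, then the product of the two
linear combinations of Kronecker atoms is the identity. -/
theorem stmt_9_aux (m q : ℕ) (a1 a2 a3 a4 d1 d2 d3 d4 : ℝ)
    (e1 : a1 * d1 = 1)
    (e2 : a2 * d1 + a1 * d2 + a2 * (m:ℝ) * d2 = 0)
    (e3 : a3 * d1 + a1 * d3 + a3 * (q:ℝ) * d3 = 0)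
    (e4 : a4 * d1 + a2 * d3 + a3 * d2 + a4 * (m:ℝ) * d2 + a4 * (q:ℝ) * d3 +
      (a1 + a2 * m + a3 * q + a4 * m * q) * d4 = 0) :
    (a1 • ((1 : Matrix (Fin m) (Fin m) ℝ) ⊗ₖ (1 : Matrix (Fin q) (Fin q) ℝ)) +
        a2 • (onesMat m ⊗ₖ (1 : Matrix (Fin q) (Fin q) ℝ)) +
        a3 • ((1 : Matrix (Fin m) (Fin m) ℝ) ⊗ₖ onesMat q) +
        a4 • (onesMat m ⊗ₖ onesMat q)) *
    (d1 • ((1 : Matrix (Fin m) (Fin m) ℝ) ⊗ₖ (1 : Matrix (Fin q) (Fin q) ℝ)) +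
        d2 • (onesMat m ⊗ₖ (1 : Matrix (Fin q) (Fin q) ℝ)) +
        d3 • ((1 : Matrix (Fin m) (Fin m) ℝ) ⊗ₖ onesMat q) +
        d4 • (onesMat m ⊗ₖ onesMat q)) = 1 := by
  have hJm : onesMat m * onesMat m = (m : ℝ) • onesMat m := by
    ext i j; simp [onesMat, Matrix.mul_apply]
  have hJq : onesMat q * onesMat q = (q : ℝ) • onesMat q := by
    ext i j; simp [onesMat, Matrix.mul_apply]
  rw [show (1 : Matrix (Fin m × Fin q) (Fin m × Fin q) ℝ) =
      (1 : Matrix (Fin m) (Fin m) ℝ) ⊗ₖ (1 : Matrix (Fin q) (Fin q) ℝ) from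
    (Matrix.one_kronecker_one).symm]
  simp only [add_mul, mul_add, smul_mul_assoc, Matrix.mul_smul,
    ← Matrix.mul_kronecker_mul, one_mul, mul_one, hJm, hJq,
    Matrix.smul_kronecker, Matrix.kronecker_smul, smul_smul]
  match_scalars
  · linear_combination e1
  · linear_combination e2
  · linear_combination e3
  · linear_combination e4

/-- Invertibility inside the span of `{I⊗I, 𝒥⊗I, I⊗𝒥, 𝒥⊗𝒥}`: under the four scalar
conditions the matrix is invertible, and its inverse lies in the same span with the
stated first three coefficients. -/
theorem stmt_9 (m q : ℕ) (a1 a2 a3 a4 : ℝ)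
    (h1 : a1 ≠ 0) (h2 : a1 + a2 * m ≠ 0) (h3 : a1 + a3 * q ≠ 0)
    (h4 : a1 + a2 * m + a3 * q + a4 * m * q ≠ 0) :
    let A : Matrix (Fin m × Fin q) (Fin m × Fin q) ℝ :=
      a1 • ((1 : Matrix (Fin m) (Fin m) ℝ) ⊗ₖ (1 : Matrix (Fin q) (Fin q) ℝ)) +
        a2 • (onesMat m ⊗ₖ (1 : Matrix (Fin q) (Fin q) ℝ)) +
        a3 • ((1 : Matrix (Fin m) (Fin m) ℝ) ⊗ₖ onesMat q) +
        a4 • (onesMat m ⊗ₖ onesMat q)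
    IsUnit A.det ∧
      ∃ d4 : ℝ, A⁻¹ =
        (1 / a1) • ((1 : Matrix (Fin m) (Fin m) ℝ) ⊗ₖ (1 : Matrix (Fin q) (Fin q) ℝ)) +
          (-a2 / (a1 * (a1 + a2 * m))) • (onesMat m ⊗ₖ (1 : Matrix (Fin q) (Fin q) ℝ)) +
          (-a3 / (a1 * (a1 + a3 * q))) • ((1 : Matrix (Fin m) (Fin m) ℝ) ⊗ₖ onesMat q) +
          d4 • (onesMat m ⊗ₖ onesMat q) := by
  intro A
  obtain ⟨d1, hd1⟩ : ∃ d : ℝ, d = 1 / a1 := ⟨_, rfl⟩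
  obtain ⟨d2, hd2⟩ : ∃ d : ℝ, d = -a2 / (a1 * (a1 + a2 * m)) := ⟨_, rfl⟩
  obtain ⟨d3, hd3⟩ : ∃ d : ℝ, d = -a3 / (a1 * (a1 + a3 * q)) := ⟨_, rfl⟩
  obtain ⟨d4, hd4⟩ : ∃ d : ℝ, d = -(a4 * d1 + a2 * d3 + a3 * d2 + a4 * m * d2 + a4 * q * d3) /
      (a1 + a2 * m + a3 * q + a4 * m * q) := ⟨_, rfl⟩
  have e1 : a1 * d1 = 1 := by rw [hd1]; field_simp
  have e2 : a2 * d1 + a1 * d2 + a2 * (m : ℝ) * d2 = 0 := by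
    rw [hd1, hd2]; field_simp; ring
  have e3 : a3 * d1 + a1 * d3 + a3 * (q : ℝ) * d3 = 0 := by
    rw [hd1, hd3]; field_simp; ring
  have e4 : a4 * d1 + a2 * d3 + a3 * d2 + a4 * (m : ℝ) * d2 + a4 * (q : ℝ) * d3 +
      (a1 + a2 * m + a3 * q + a4 * m * q) * d4 = 0 := by
    rw [hd4]; field_simp; ring
  have hAB : A * (d1 • ((1 : Matrix (Fin m) (Fin m) ℝ) ⊗ₖ (1 : Matrix (Fin q) (Fin q) ℝ)) +
        d2 • (onesMat m ⊗ₖ (1 : Matrix (Fin q) (Fin q) ℝ)) +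
        d3 • ((1 : Matrix (Fin m) (Fin m) ℝ) ⊗ₖ onesMat q) +
        d4 • (onesMat m ⊗ₖ onesMat q)) = 1 :=
    stmt_9_aux m q a1 a2 a3 a4 d1 d2 d3 d4 e1 e2 e3 e4
  exact ⟨Matrix.isUnit_det_of_right_inverse hAB, d4, by
    rw [Matrix.inv_eq_right_inv hAB, hd1, hd2, hd3]⟩
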